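/- Let μ be a probability measure supported in [0,1] with |μ̂(ξ)| ≤ C(1+|ξ|)^{-β} for all ξ ∈ ℝ, for some C < ∞ and some β with 1/4 < β ≤ 1, and let (s,t) ∈ (0,1)². Let χ be a Schwartz function on ℝ whose Fourier transform χ̂ has compact support. Define, for δ > 0, J(δ) = ∫_{ℝ²} |μ̂(η) · μ̂(−((1−s)/(1−t))η) · μ̂(−((s/(1−t))η + ξ)) · μ̂((t/(1−t))η + ξ) · χ̂(δ^{-1}ξ)| dξ dη. Then J(δ) → 0 as δ → 0⁺. -/

import Mathlib

open MeasureTheory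

/-- Fourier transform of a finite Borel measure on ℝ:
`μ̂(ξ) = ∫ e^{-2πiξx} dμ(x)`. -/
noncomputable def ftM (μ : Measure ℝ) (ξ : ℝ) : ℂ :=
  ∫ x, Complex.exp (((-(2 * Real.pi * ξ * x) : ℝ) : ℂ) * Complex.I) ∂μ


/-- Fourier transform on ℝ: `ĝ(ξ) = ∫ e^{-2πiξx} g(x) dx`. -/
noncomputable def ft1 (g : ℝ → ℂ) (ξ : ℝ) : ℂ :=
  ∫ x : ℝ, Complex.exp (((-(2 * Real.pi * ξ * x) : ℝ) : ℂ) * Complex.I) * g x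

lemma ft1_eq_fourierIntegral (χ : SchwartzMap ℝ ℂ) : ft1 ⇑χ = FourierTransform.fourier ⇑χ := by
  funext w
  rw [Real.fourier_eq']
  unfold ft1
  congr 1
  funext x
  simp [RCLike.inner_apply, smul_eq_mul]
  left
  ring_nf

lemma key_bound {β : ℝ} (hβ : 0 < β) {k : ℝ} (hk : 0 < k) {w : ℝ} (hw : |w| ≤ 1) (η : ℝ) :
    (1 + |k * η + w|) ^ (-β) ≤ (min 1 k / 2) ^ (-β) * (1 + |η|) ^ (-β) := by
  have hm : 0 < min 1 k := lt_min one_pos hk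
  have h1 : min 1 k / 2 * (1 + |η|) ≤ 1 + |k * η + w| := by
    have e1 : min 1 k * (1 + |η|) ≤ 1 + |k * η| := by
      rw [abs_mul, abs_of_pos hk]
      nlinarith [min_le_left 1 k, min_le_right 1 k, abs_nonneg η]
    have e2 : 1 + |k * η| ≤ (1 + |k * η + w|) * 2 := by
      have h3 : |k * η| ≤ |k * η + w| + |w| := by
        calc |k * η| = |(k * η + w) + (-w)| := by ring_nf
        _ ≤ |k * η + w| + |(-w)| := abs_add_le _ _
        _ = |k * η + w| + |w| := by rw [abs_neg]
      nlinarith [abs_nonneg (k * η + w)]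
    nlinarith [abs_nonneg η, abs_nonneg (k * η + w)]
  have h2 : (1 + |k * η + w|) ^ (-β) ≤ (min 1 k / 2 * (1 + |η|)) ^ (-β) :=
    Real.rpow_le_rpow_of_nonpos (by positivity) h1 (neg_nonpos.mpr hβ.le)
  rwa [Real.mul_rpow (by positivity) (by positivity)] at h2

set_option maxHeartbeats 1000000 in
theorem stmt8 (μ : Measure ℝ) (hprob : IsProbabilityMeasure μ)
    (hμsupp : μ (Set.Icc (0 : ℝ) 1)ᶜ = 0)
    (C β : ℝ) (hβ0 : 1 / 4 < β) (hβ1 : β ≤ 1)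
    (hdecay : ∀ ξ : ℝ, ‖ftM μ ξ‖ ≤ C * (1 + |ξ|) ^ (-β))
    (s t : ℝ) (hs : s ∈ Set.Ioo (0 : ℝ) 1) (ht : t ∈ Set.Ioo (0 : ℝ) 1)
    (χ : SchwartzMap ℝ ℂ) (hχ : HasCompactSupport (ft1 ⇑χ)) :
    Filter.Tendsto (fun δ : ℝ =>
      ∫ q : ℝ × ℝ,
        ‖ftM μ q.2 * ftM μ (-((1 - s) / (1 - t)) * q.2) *
          ftM μ (-(s / (1 - t) * q.2 + q.1)) * ftM μ (t / (1 - t) * q.2 + q.1) *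
          ft1 ⇑χ (δ⁻¹ * q.1)‖)
      (nhdsWithin 0 (Set.Ioi 0)) (nhds 0) := by
  obtain ⟨hs0, hs1⟩ := hs
  obtain ⟨ht0, ht1⟩ := ht
  have ht1' : (0 : ℝ) < 1 - t := by linarith
  have hβpos : (0 : ℝ) < β := by linarith
  set a : ℝ := (1 - s) / (1 - t) with ha_def
  set b : ℝ := s / (1 - t) with hb_def
  set c : ℝ := t / (1 - t) with hc_def
  have ha : 0 < a := div_pos (by linarith) ht1'
  have hb : 0 < b := div_pos hs0 ht1'
  have hc : 0 < c := div_pos ht0 ht1'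
  -- `C ≥ 1`
  have hC1 : (1 : ℝ) ≤ C := by
    have h0 := hdecay 0
    have hμ0 : ftM μ 0 = 1 := by unfold ftM; simp
    rw [hμ0] at h0
    simpa using h0
  have hC0 : (0 : ℝ) ≤ C := by linarith
  -- continuity of the Fourier transform of χ
  have hcont : Continuous (ft1 ⇑χ) := by
    rw [ft1_eq_fourierIntegral]
    exact VectorFourier.fourierIntegral_continuous Real.continuous_fourierChar
      (L := innerₗ ℝ) continuous_inner χ.integrable
  -- bound on the support of `ft1 χ`
  obtain ⟨R, hR⟩ := hχ.isBounded.subset_closedBall 0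
  set R' : ℝ := max R 1 with hR'_def
  have hR'1 : (1 : ℝ) ≤ R' := le_max_right _ _
  have hR'0 : (0 : ℝ) < R' := by linarith
  have hsupp : ∀ y : ℝ, R' < |y| → ft1 ⇑χ y = 0 := by
    intro y hy
    by_contra h
    have hmem : y ∈ tsupport (ft1 ⇑χ) := subset_tsupport _ h
    have := hR hmem
    rw [Metric.mem_closedBall, Real.dist_eq, sub_zero] at this
    have : |y| ≤ R' := this.trans (le_max_left _ _)
    linarith
  -- constants
  set Ka : ℝ := (min 1 a / 2) ^ (-β) with hKa_def
  set Kb : ℝ := (min 1 b / 2) ^ (-β) with hKb_def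
  set Kc : ℝ := (min 1 c / 2) ^ (-β) with hKc_def
  have hKa0 : 0 < Ka := Real.rpow_pos_of_pos (by positivity) _
  have hKb0 : 0 < Kb := Real.rpow_pos_of_pos (by positivity) _
  have hKc0 : 0 < Kc := Real.rpow_pos_of_pos (by positivity) _
  set D : ℝ := C ^ 4 * (Ka * Kb * Kc) with hD_def
  have hD0 : 0 < D := by positivity
  -- pointwise bound
  have hpt : ∀ ξ η : ℝ, |ξ| ≤ 1 →
      ‖ftM μ η * ftM μ (-a * η) * ftM μ (-(b * η + ξ)) * ftM μ (c * η + ξ)‖ ≤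
        D * (1 + |η|) ^ (-(4 * β)) := by
    intro ξ η hξ
    have hP : (0 : ℝ) < 1 + |η| := by positivity
    have e0 : ‖ftM μ η‖ ≤ C * (1 + |η|) ^ (-β) := hdecay η
    have e1 : ‖ftM μ (-a * η)‖ ≤ C * (Ka * (1 + |η|) ^ (-β)) := by
      have h := hdecay (-a * η)
      have habs : |(-a) * η| = |a * η + 0| := by rw [add_zero, neg_mul, abs_neg]
      rw [habs] at h
      exact h.trans (mul_le_mul_of_nonneg_left
        (key_bound hβpos ha (by simp) η) hC0)
    have e2 : ‖ftM μ (-(b * η + ξ))‖ ≤ C * (Kb * (1 + |η|) ^ (-β)) := by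
      have h := hdecay (-(b * η + ξ))
      rw [abs_neg] at h
      exact h.trans (mul_le_mul_of_nonneg_left (key_bound hβpos hb hξ η) hC0)
    have e3 : ‖ftM μ (c * η + ξ)‖ ≤ C * (Kc * (1 + |η|) ^ (-β)) :=
      (hdecay _).trans (mul_le_mul_of_nonneg_left (key_bound hβpos hc hξ η) hC0)
    calc ‖ftM μ η * ftM μ (-a * η) * ftM μ (-(b * η + ξ)) * ftM μ (c * η + ξ)‖
        = ‖ftM μ η‖ * ‖ftM μ (-a * η)‖ * ‖ftM μ (-(b * η + ξ))‖ * ‖ftM μ (c * η + ξ)‖ := by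
          simp [norm_mul]
      _ ≤ (C * (1 + |η|) ^ (-β)) * (C * (Ka * (1 + |η|) ^ (-β))) *
            (C * (Kb * (1 + |η|) ^ (-β))) * (C * (Kc * (1 + |η|) ^ (-β))) := by
          gcongr <;> positivity
      _ = D * ((1 + |η|) ^ (-β) * (1 + |η|) ^ (-β) * (1 + |η|) ^ (-β) * (1 + |η|) ^ (-β)) := by
          rw [hD_def]; ring
      _ = D * (1 + |η|) ^ (-(4 * β)) := by
          rw [← Real.rpow_add hP, ← Real.rpow_add hP, ← Real.rpow_add hP]
          congr 1
          ring
  -- integrability of the radial factor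
  have h4β : (1 : ℝ) < 4 * β := by linarith
  have hIint : Integrable (fun η : ℝ => (1 + |η|) ^ (-(4 * β))) := by
    simpa [Real.norm_eq_abs] using
      integrable_one_add_norm (E := ℝ) (μ := volume) (by simpa using h4β)
  set I : ℝ := ∫ η : ℝ, (1 + |η|) ^ (-(4 * β)) with hI_def
  set L : ℝ := ∫ x : ℝ, ‖ft1 ⇑χ x‖ with hL_def
  have hL0 : 0 ≤ L := integral_nonneg fun x => norm_nonneg _
  -- main bound for small δ
  have hbound : ∀ δ : ℝ, 0 < δ → δ ≤ R'⁻¹ →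
      (∫ q : ℝ × ℝ,
        ‖ftM μ q.2 * ftM μ (-a * q.2) * ftM μ (-(b * q.2 + q.1)) * ftM μ (c * q.2 + q.1) *
          ft1 ⇑χ (δ⁻¹ * q.1)‖) ≤ (R' * δ * L) * (D * I) := by
    intro δ hδ hδR
    have hδ' : δ⁻¹ ≠ 0 := inv_ne_zero hδ.ne'
    -- the dominating function
    set g : ℝ × ℝ → ℝ := fun q => ‖ft1 ⇑χ (δ⁻¹ * q.1)‖ * (D * (1 + |q.2|) ^ (-(4 * β)))
      with hg_def
    have hle : ∀ q : ℝ × ℝ,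
        ‖ftM μ q.2 * ftM μ (-a * q.2) * ftM μ (-(b * q.2 + q.1)) * ftM μ (c * q.2 + q.1) *
          ft1 ⇑χ (δ⁻¹ * q.1)‖ ≤ g q := by
      intro q
      by_cases h0 : ft1 ⇑χ (δ⁻¹ * q.1) = 0
      · simp [g, h0]
      · have hq1 : |q.1| ≤ 1 := by
          have h1 : |δ⁻¹ * q.1| ≤ R' := by
            by_contra h2
            exact h0 (hsupp _ (lt_of_not_ge h2))
          rw [abs_mul, abs_inv, abs_of_pos hδ] at h1
          have h3 : |q.1| ≤ R' * δ := by
            calc |q.1| = δ * (δ⁻¹ * |q.1|) := by field_simp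
            _ ≤ δ * R' := mul_le_mul_of_nonneg_left h1 hδ.le
            _ = R' * δ := mul_comm _ _
          have h4 : R' * δ ≤ 1 := by
            calc R' * δ ≤ R' * R'⁻¹ := by nlinarith
            _ = 1 := mul_inv_cancel₀ hR'0.ne'
          linarith
        rw [norm_mul]
        calc ‖ftM μ q.2 * ftM μ (-a * q.2) * ftM μ (-(b * q.2 + q.1)) *
              ftM μ (c * q.2 + q.1)‖ * ‖ft1 ⇑χ (δ⁻¹ * q.1)‖
            ≤ (D * (1 + |q.2|) ^ (-(4 * β))) * ‖ft1 ⇑χ (δ⁻¹ * q.1)‖ :=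
              mul_le_mul_of_nonneg_right (hpt q.1 q.2 hq1) (norm_nonneg _)
          _ = g q := by rw [hg_def]; ring
    -- integrability of g
    have hF : Integrable (fun ξ : ℝ => ‖ft1 ⇑χ (δ⁻¹ * ξ)‖) := by
      have hcs : HasCompactSupport fun x : ℝ => ft1 ⇑χ (δ⁻¹ * x) := by
        simpa [smul_eq_mul] using hχ.comp_smul hδ'
      exact (Continuous.integrable_of_hasCompactSupport
        ((hcont.comp (continuous_const.mul continuous_id)).norm) hcs.norm)
    have hG : Integrable (fun η : ℝ => D * (1 + |η|) ^ (-(4 * β))) := hIint.const_mul D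
    have hgint : Integrable g := by
      rw [hg_def, Measure.volume_eq_prod]
      exact hF.mul_prod hG
    have hmono := integral_mono_of_nonneg
      (Filter.Eventually.of_forall fun q : ℝ × ℝ => norm_nonneg _) hgint
      (Filter.Eventually.of_forall hle)
    refine hmono.trans ?_
    -- compute ∫ g
    have hval : (∫ q : ℝ × ℝ, g q) = (δ * L) * (D * I) := by
      simp only [hg_def]
      rw [Measure.volume_eq_prod,
        integral_prod_mul (fun ξ : ℝ => ‖ft1 ⇑χ (δ⁻¹ * ξ)‖)
          (fun η : ℝ => D * (1 + |η|) ^ (-(4 * β)))]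
      have h1 : (∫ ξ : ℝ, ‖ft1 ⇑χ (δ⁻¹ * ξ)‖) = δ * L := by
        rw [Measure.integral_comp_inv_mul_left (fun x => ‖ft1 ⇑χ x‖) δ,
          abs_of_pos hδ, smul_eq_mul, hL_def]
      have h2 : (∫ η : ℝ, D * (1 + |η|) ^ (-(4 * β))) = D * I := by
        rw [MeasureTheory.integral_const_mul, hI_def]
      rw [h1, h2]
    rw [hval]
    have hI0 : 0 ≤ I := integral_nonneg fun η => Real.rpow_nonneg (by positivity) _
    have hnn : 0 ≤ δ * L * (D * I) := by positivity
    calc δ * L * (D * I) = 1 * (δ * L * (D * I)) := by ring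
    _ ≤ R' * (δ * L * (D * I)) := mul_le_mul_of_nonneg_right hR'1 hnn
    _ = (R' * δ * L) * (D * I) := by ring
  -- conclude by squeezing
  have hev1 : ∀ᶠ δ : ℝ in nhdsWithin 0 (Set.Ioi 0), 0 ≤
      ∫ q : ℝ × ℝ,
        ‖ftM μ q.2 * ftM μ (-a * q.2) * ftM μ (-(b * q.2 + q.1)) * ftM μ (c * q.2 + q.1) *
          ft1 ⇑χ (δ⁻¹ * q.1)‖ :=
    Filter.Eventually.of_forall fun δ => integral_nonneg fun q => norm_nonneg _
  have hev2 : ∀ᶠ δ : ℝ in nhdsWithin 0 (Set.Ioi 0),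
      (∫ q : ℝ × ℝ,
        ‖ftM μ q.2 * ftM μ (-a * q.2) * ftM μ (-(b * q.2 + q.1)) * ftM μ (c * q.2 + q.1) *
          ft1 ⇑χ (δ⁻¹ * q.1)‖) ≤ (R' * δ * L) * (D * I) := by
    have h1 : ∀ᶠ δ : ℝ in nhdsWithin 0 (Set.Ioi 0), δ ∈ Set.Ioi (0 : ℝ) :=
      eventually_mem_nhdsWithin
    have h2 : ∀ᶠ δ : ℝ in nhdsWithin 0 (Set.Ioi 0), δ < R'⁻¹ := by
      apply Filter.Eventually.filter_mono nhdsWithin_le_nhds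
      exact eventually_lt_nhds (inv_pos.mpr hR'0)
    filter_upwards [h1, h2] with δ hδ1 hδ2
    exact hbound δ hδ1 hδ2.le
  have hg0 : Filter.Tendsto (fun δ : ℝ => (R' * δ * L) * (D * I))
      (nhdsWithin 0 (Set.Ioi 0)) (nhds 0) := by
    have : Filter.Tendsto (fun δ : ℝ => (R' * δ * L) * (D * I)) (nhds 0) (nhds 0) := by
      have hcont2 : Continuous (fun δ : ℝ => (R' * δ * L) * (D * I)) :=
        ((continuous_const.mul continuous_id).mul continuous_const).mul continuous_const
      simpa using hcont2.tendsto 0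
    exact this.mono_left nhdsWithin_le_nhds
  exact squeeze_zero' hev1 hev2 hg0
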